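/- Let A be a self-adjoint operator with operator norm ‖A‖ ≤ 2^{-3/2}, and set Γ := √(1+A) − 1. Then 0 ≤ Γ² ≤ A²/2 in the Loewner order. -/

import Mathlib

open Matrix
open scoped Matrix.Norms.L2Operator ComplexOrder

/-- The positive semidefinite square root of a positive semidefinite matrix
(removed from Mathlib; restored here with its old definition). -/
noncomputable def Matrix.PosSemidef.sqrt {𝕜 : Type*} [RCLike 𝕜] {n : Type*} [Fintype n]
    [DecidableEq n] {A : Matrix n n 𝕜} (hA : A.PosSemidef) : Matrix n n 𝕜 :=
  hA.1.eigenvectorUnitary.1 * diagonal ((↑) ∘ (Real.sqrt ∘ hA.1.eigenvalues)) *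
  (star hA.1.eigenvectorUnitary : Matrix n n 𝕜)

/-- If `A` is self-adjoint with operator norm `‖A‖ ≤ 2^{-3/2}` (so `1 + A ≥ 0`) and
`Γ := √(1+A) − 1`, then `0 ≤ Γ² ≤ A²/2` in the Loewner order. -/
theorem sq_sqrt_sub_one_le {n : Type*} [Fintype n] [DecidableEq n]
    (A : Matrix n n ℂ) (hA : A.IsHermitian) (hnorm : ‖A‖ ≤ (2 : ℝ) ^ (-(3 : ℝ) / 2))
    (h1 : (1 + A).PosSemidef) :
    ((h1.sqrt - 1) * (h1.sqrt - 1)).PosSemidef ∧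
    ((1 / 2 : ℂ) • (A * A) - (h1.sqrt - 1) * (h1.sqrt - 1)).PosSemidef := by
  classical
  set e := hA.eigenvalues with he
  set U := (hA.eigenvectorUnitary : Matrix n n ℂ) with hUdef
  have hU1 : U * star U = 1 := Matrix.mem_unitaryGroup_iff.mp hA.eigenvectorUnitary.2
  have hU2 : star U * U = 1 := Matrix.mem_unitaryGroup_iff'.mp hA.eigenvectorUnitary.2
  -- eigenvalue bound
  have hbound : ∀ i, |e i| ≤ ‖A‖ := by
    intro i
    have hv := hA.mulVec_eigenvectorBasis i
    have h2 := A.l2_opNorm_mulVec (hA.eigenvectorBasis i)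
    have hn1 : ‖hA.eigenvectorBasis i‖ = 1 := hA.eigenvectorBasis.orthonormal.1 i
    rw [hn1, mul_one] at h2
    have h3 : ‖(EuclideanSpace.equiv n ℂ).symm (A *ᵥ hA.eigenvectorBasis i)‖ = |e i| := by
      have h4 : (EuclideanSpace.equiv n ℂ).symm (A *ᵥ hA.eigenvectorBasis i)
          = (e i : ℂ) • (hA.eigenvectorBasis i) := by
        ext j
        simpa [Complex.real_smul] using congrFun hv j
      rw [h4, norm_smul, hn1, mul_one]
      simp
    rw [h3] at h2
    exact h2
  have hsq : ∀ i, (e i) ^ 2 ≤ 1 / 8 := by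
    intro i
    have h8 : ((2 : ℝ) ^ (-(3 : ℝ) / 2)) ^ 2 = 1 / 8 := by
      rw [← Real.rpow_natCast ((2:ℝ) ^ (-(3:ℝ)/2)) 2, ← Real.rpow_mul (by norm_num)]
      rw [show (-(3:ℝ)/2 * (2:ℕ)) = ((-3 : ℤ) : ℝ) by push_cast; ring, Real.rpow_intCast]
      norm_num
    calc (e i) ^ 2 = |e i| ^ 2 := (sq_abs _).symm
      _ ≤ (‖A‖) ^ 2 := by
          apply pow_le_pow_left₀ (abs_nonneg _) (hbound i)
      _ ≤ ((2 : ℝ) ^ (-(3 : ℝ) / 2)) ^ 2 := by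
          apply pow_le_pow_left₀ (norm_nonneg _) hnorm
      _ = 1 / 8 := h8
  have hpos : ∀ i, (0:ℝ) ≤ 1 + e i := fun i => by nlinarith [hsq i, sq_nonneg (e i + 1)]
  set g : n → ℝ := fun i => Real.sqrt (1 + e i) with hg
  -- the scalar inequality
  have key : ∀ i, (g i - 1) ^ 2 ≤ (e i) ^ 2 / 2 := by
    intro i
    have hs0 : 0 ≤ g i := Real.sqrt_nonneg _
    have hss : g i ^ 2 = 1 + e i := Real.sq_sqrt (hpos i)
    nlinarith [hsq i, sq_nonneg (g i - 1), sq_nonneg (2 * g i - (2 + e i)), sq_nonneg (e i)]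
  -- functional calculus setup
  have hM : ∀ f : n → ℝ, (U * diagonal (fun i => ((f i : ℝ) : ℂ)) * star U)
      * (U * diagonal (fun i => ((f i : ℝ) : ℂ)) * star U)
      = U * diagonal (fun i => ((f i ^ 2 : ℝ) : ℂ)) * star U := by
    intro f
    simp only [mul_assoc]
    rw [← mul_assoc (star U) U, hU2, one_mul]
    have hdd : (fun i => ((f i : ℝ) : ℂ) * ((f i : ℝ) : ℂ)) = fun i => ((f i ^ 2 : ℝ) : ℂ) := by
      funext i; push_cast; ring
    rw [← mul_assoc (diagonal fun i => ((f i : ℝ) : ℂ)), diagonal_mul_diagonal, hdd]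
  have hPSD : ∀ f : n → ℝ, (∀ i, 0 ≤ f i) →
      (U * diagonal (fun i => ((f i : ℝ) : ℂ)) * star U).PosSemidef := by
    intro f hf
    have hd : (diagonal (fun i => ((f i : ℝ) : ℂ))).PosSemidef := by
      rw [posSemidef_diagonal_iff]
      intro i
      rw [Complex.zero_le_real]
      exact hf i
    simpa [mul_assoc, Matrix.star_eq_conjTranspose] using hd.mul_mul_conjTranspose_same U
  have hsub : ∀ f f' : n → ℝ, U * diagonal (fun i => ((f i : ℝ) : ℂ)) * star U
      - U * diagonal (fun i => ((f' i : ℝ) : ℂ)) * star U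
      = U * diagonal (fun i => ((f i - f' i : ℝ) : ℂ)) * star U := by
    intro f f'
    rw [← sub_mul, ← mul_sub, show diagonal (fun i => ((f i : ℝ) : ℂ))
        - diagonal (fun i => ((f' i : ℝ) : ℂ)) = diagonal (fun i => ((f i - f' i : ℝ) : ℂ)) from by
      rw [diagonal_sub]; congr 1; funext i; push_cast; ring]
  set S := U * diagonal (fun i => ((g i : ℝ) : ℂ)) * star U with hSdef
  have hSps : S.PosSemidef := hPSD g (fun i => Real.sqrt_nonneg _)
  have hA_eq : A = U * diagonal (fun i => ((e i : ℝ) : ℂ)) * star U := by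
    exact hA.spectral_theorem
  have hone : (1 : Matrix n n ℂ) = U * diagonal (fun _ : n => ((1 : ℝ) : ℂ)) * star U := by
    simp [hU1]
  have hS2 : S ^ 2 = 1 + A := by
    rw [sq, hSdef, hM g]
    have hgg : (fun i => ((g i ^ 2 : ℝ) : ℂ)) = fun i => ((1 + e i : ℝ) : ℂ) := by
      funext i
      norm_cast
      rw [hg]
      exact Real.sq_sqrt (hpos i)
    rw [hgg]
    have hd : diagonal (fun i => ((1 + e i : ℝ) : ℂ))
        = diagonal (fun _ : n => ((1:ℝ):ℂ)) + diagonal (fun i => ((e i : ℝ) : ℂ)) := by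
      rw [diagonal_add]
      congr 1
      funext i
      push_cast
      ring
    rw [hd, mul_add, add_mul, ← hone, ← hA_eq]
  have hSeq : S = h1.sqrt := by
    open scoped MatrixOrder in
    have e1 : CFC.sqrt (1 + A) = S := CFC.sqrt_unique (by rw [← sq]; exact hS2) hSps.nonneg
    open scoped MatrixOrder in
    have e2 : CFC.sqrt (1 + A) = h1.sqrt := by
      rw [CFC.sqrt_eq_real_sqrt _ h1.nonneg, cfcₙ_eq_cfc (hf := Real.continuous_sqrt.continuousOn) (hf0 := Real.sqrt_zero),
        h1.1.cfc_eq]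
      simp [IsHermitian.cfc, Matrix.PosSemidef.sqrt]
    rw [← e1, e2]
  have hGamma : h1.sqrt - 1 = U * diagonal (fun i => ((g i - 1 : ℝ) : ℂ)) * star U := by
    rw [← hSeq, hSdef, ← hsub g (fun _ => 1), ← hone]
  have hGsq : (h1.sqrt - 1) * (h1.sqrt - 1)
      = U * diagonal (fun i => (((g i - 1) ^ 2 : ℝ) : ℂ)) * star U := by
    rw [hGamma, hM (fun i => g i - 1)]
  constructor
  · rw [hGsq]
    exact hPSD _ (fun i => sq_nonneg _)
  · have hAA : (1 / 2 : ℂ) • (A * A)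
        = U * diagonal (fun i => ((e i ^ 2 / 2 : ℝ) : ℂ)) * star U := by
      rw [hA_eq, hM e, ← smul_mul_assoc, ← mul_smul_comm,
        show (1 / 2 : ℂ) • (diagonal fun i => ((e i ^ 2 : ℝ) : ℂ))
            = diagonal (fun i => ((e i ^ 2 / 2 : ℝ) : ℂ)) from by
          have hfun : (fun i => ((e i ^ 2 / 2 : ℝ) : ℂ))
              = (1 / 2 : ℂ) • fun i => ((e i ^ 2 : ℝ) : ℂ) := by
            funext i
            rw [Pi.smul_apply, smul_eq_mul]
            push_cast
            ring
          rw [hfun, diagonal_smul]]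
    rw [hAA, hGsq, hsub]
    apply hPSD
    intro i
    have := key i
    linarith
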